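/- In a depth-first-search spanning tree T of a connected graph G with at least 2 vertices, the set of internal vertices of T (vertices with at least one child) is a connected vertex cover of G. -/

import Mathlib

open SimpleGraph

/-- If `u` is a strict ancestor of `v` (distance-wise), `u` has a child. -/
private lemma dfs_step {V : Type*} (T : SimpleGraph V) (hc : T.Connected) (r u v : V)
    (hpos : 0 < T.dist u v) (heq : T.dist r u + T.dist u v = T.dist r v) :
    ∃ c : V, T.Adj u c ∧ T.dist r c = T.dist r u + 1 := by
  obtain ⟨w, hw⟩ := hc.exists_walk_length_eq_dist u v
  cases w with
  | nil => simp at hw; omega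
  | cons h q =>
    rename_i c
    refine ⟨c, h, ?_⟩
    have h1 : T.dist r c ≤ T.dist r u + 1 := by
      calc T.dist r c ≤ T.dist r u + T.dist u c := hc.dist_triangle
        _ ≤ T.dist r u + 1 := by
            have := T.dist_le h.toWalk
            simp at this; omega
    have h2 : T.dist c v ≤ q.length := T.dist_le q
    have h3 : T.dist r v ≤ T.dist r c + T.dist c v := hc.dist_triangle
    simp [SimpleGraph.Walk.length_cons] at hw
    omega

/-- Every non-root vertex has a parent one step closer to the root. -/
private lemma dfs_parent {V : Type*} (T : SimpleGraph V) (hc : T.Connected) (r v : V)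
    (hne : v ≠ r) : ∃ p : V, T.Adj p v ∧ T.dist r v = T.dist r p + 1 := by
  obtain ⟨w, hw⟩ := hc.exists_walk_length_eq_dist v r
  have hpos : 0 < T.dist v r := hc.pos_dist_of_ne hne
  cases w with
  | nil => simp at hpos
  | cons h q =>
    rename_i p
    refine ⟨p, h.symm, ?_⟩
    have h2 : T.dist r p ≤ q.length := by
      have := T.dist_le q.reverse
      simpa [SimpleGraph.Walk.length_reverse] using this
    have h3 : T.dist r v ≤ T.dist r p + 1 := by
      calc T.dist r v ≤ T.dist r p + T.dist p v := hc.dist_triangle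
        _ ≤ T.dist r p + 1 := by
            have := T.dist_le h.symm.toWalk
            simp at this; omega
    have hsymm : T.dist r v = T.dist v r := SimpleGraph.dist_comm ..
    simp [SimpleGraph.Walk.length_cons] at hw
    omega

theorem dfs_internal_vertices_cvc {V : Type*} [Fintype V]
    (G T : SimpleGraph V) (hconn : G.Connected) (hcard : 2 ≤ Fintype.card V)
    (hT : T.IsTree) (hsub : T ≤ G) (r : V)
    (hdfs : ∀ u v : V, G.Adj u v →
      (T.dist r u + T.dist u v = T.dist r v) ∨ (T.dist r v + T.dist v u = T.dist r u)) :
    letI S : Set V := {v : V | ∃ c : V, T.Adj v c ∧ T.dist r c = T.dist r v + 1}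
    (∀ u v : V, G.Adj u v → u ∈ S ∨ v ∈ S) ∧ (G.induce S).Connected := by
  set S : Set V := {v : V | ∃ c : V, T.Adj v c ∧ T.dist r c = T.dist r v + 1} with hS
  have hc : T.Connected := hT.isConnected
  -- vertex cover
  have hcov : ∀ u v : V, G.Adj u v → u ∈ S ∨ v ∈ S := by
    intro u v huv
    have hne : u ≠ v := huv.ne
    rcases hdfs u v huv with h | h
    · left
      exact dfs_step T hc r u v (hc.pos_dist_of_ne hne) h
    · right
      exact dfs_step T hc r v u (hc.pos_dist_of_ne hne.symm) h
  refine ⟨hcov, ?_⟩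
  -- root is internal
  have hr : r ∈ S := by
    obtain ⟨v, hv⟩ := Fintype.exists_ne_of_one_lt_card (by omega) r
    have hpos : 0 < T.dist r v := hc.pos_dist_of_ne (Ne.symm hv)
    have heq : T.dist r r + T.dist r v = T.dist r v := by
      simp [SimpleGraph.dist_self]
    exact dfs_step T hc r r v hpos heq
  -- reachability to the root within S
  have key : ∀ n : ℕ, ∀ v : V, T.dist r v ≤ n → ∀ hv : v ∈ S,
      (G.induce S).Reachable ⟨v, hv⟩ ⟨r, hr⟩ := by
    intro n
    induction n with
    | zero =>
      intro v hd hv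
      have hv0 : T.dist r v = 0 := Nat.le_zero.mp hd
      have hrv : r = v := hc.dist_eq_zero_iff.mp hv0
      subst hrv
      exact SimpleGraph.Reachable.refl _
    | succ n ih =>
      intro v hd hv
      by_cases hvr : v = r
      · subst hvr; exact SimpleGraph.Reachable.refl _
      · obtain ⟨p, hadj, hdp⟩ := dfs_parent T hc r v hvr
        have hp : p ∈ S := ⟨v, hadj, hdp⟩
        have hstep : (G.induce S).Adj ⟨v, hv⟩ ⟨p, hp⟩ := by
          simp [SimpleGraph.comap_adj]
          exact hsub hadj.symm
        exact (hstep.reachable).trans (ih p (by omega) hp)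
  rw [SimpleGraph.connected_iff]
  refine ⟨?_, ⟨⟨r, hr⟩⟩⟩
  intro a b
  exact (key (T.dist r a.1) a.1 le_rfl a.2).trans (key (T.dist r b.1) b.1 le_rfl b.2).symm
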